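/- arXiv:2205.12423 — 2 statements merged into one kernel-verified Lean document; each statement's English description precedes it below -/
import Mathlib

section
/- Let h : ℝ → ℝ be nondecreasing and let β_1 ≥ β_2 ≥ ... ≥ β_n be reals. Define f : {0,1}^n → ℝ by f(z) = h(β_0 + Σ_j β_j z_j). Then the Shapley values of f satisfy φ_1 ≥ φ_2 ≥ ... ≥ φ_n. -/
open Finset

/-- Shapley value of coordinate `j` for `f : {0,1}^n → ℝ`, with points of
`{0,1}^n` identified with subsets of `Fin n`. -/
noncomputable def shapley {n : ℕ} (f : Finset (Fin n) → ℝ) (j : Fin n) : ℝ :=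
  ∑ S ∈ ((univ : Finset (Fin n)).erase j).powerset,
    ((S.card.factorial * (n - S.card - 1).factorial : ℕ) : ℝ) / (n.factorial : ℝ)
      * (f (insert j S) - f S)

/-- If `h` is nondecreasing and `β₁ ≥ β₂ ≥ ⋯ ≥ β_n`, then the Shapley values of
`f(z) = h(β₀ + Σ_j β_j z_j)` satisfy `φ₁ ≥ φ₂ ≥ ⋯ ≥ φ_n`. -/
theorem shapley_monotone_of_increasing_additive (n : ℕ) (h : ℝ → ℝ)
    (hh : Monotone h) (β₀ : ℝ) (β : Fin n → ℝ)
    (hβ : ∀ i j : Fin n, i ≤ j → β j ≤ β i) :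
    ∀ i j : Fin n, i ≤ j →
      shapley (fun z => h (β₀ + ∑ l ∈ z, β l)) j
        ≤ shapley (fun z => h (β₀ + ∑ l ∈ z, β l)) i := by
  intro i j hij
  rcases eq_or_lt_of_le hij with rfl | hlt
  · exact le_refl _
  have hne : i ≠ j := ne_of_lt hlt
  set F : Finset (Fin n) → ℝ := fun z => h (β₀ + ∑ l ∈ z, β l) with hF
  set T : Finset (Fin n) := ((univ : Finset (Fin n)).erase j).erase i with hT
  have hiT : i ∉ T := notMem_erase _ _
  have hjT : j ∉ T := by
    intro hjmem
    exact (notMem_erase j univ) (mem_of_mem_erase hjmem)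
  have h1 : (univ : Finset (Fin n)).erase j = insert i T := by
    rw [hT, insert_erase (mem_erase.2 ⟨hne, mem_univ i⟩)]
  have h2 : (univ : Finset (Fin n)).erase i = insert j T := by
    rw [hT, Finset.erase_right_comm, insert_erase (mem_erase.2 ⟨hne.symm, mem_univ j⟩)]
  unfold shapley
  rw [h1, h2, sum_powerset_insert hiT, sum_powerset_insert hjT,
    ← sum_add_distrib, ← sum_add_distrib]
  apply sum_le_sum
  intro S hS
  have hSsub : S ⊆ T := mem_powerset.1 hS
  have hiS : i ∉ S := fun hm => hiT (hSsub hm)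
  have hjS : j ∉ S := fun hm => hjT (hSsub hm)
  have hci : (insert i S).card = S.card + 1 := card_insert_of_notMem hiS
  have hcj : (insert j S).card = S.card + 1 := card_insert_of_notMem hjS
  have hcomm : insert j (insert i S) = insert i (insert j S) := Finset.insert_comm j i S
  rw [hci, hcj, hcomm]
  have hab : F (insert j S) ≤ F (insert i S) := by
    apply hh
    rw [sum_insert hjS, sum_insert hiS]
    linarith [hβ i j hij]
  have hw1 : (0:ℝ) ≤ ((S.card.factorial * (n - S.card - 1).factorial : ℕ) : ℝ)
      / (n.factorial : ℝ) := by positivity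
  have hw2 : (0:ℝ) ≤ (((S.card + 1).factorial * (n - (S.card + 1) - 1).factorial : ℕ) : ℝ)
      / (n.factorial : ℝ) := by positivity
  simp only [hF]
  nlinarith [hab, hw1, hw2]
end

section
/- Let h : ℝ → ℝ be strictly increasing, β_0 ∈ ℝ, and β_1,...,β_n ∈ ℝ. Let π be a permutation of {1,...,n}, and let π' be obtained from π by swapping positions r and r+1. Then AUC(π') − AUC(π) = h(β_0 + Σ_{ℓ<r} β_{π(ℓ)} + β_{π(r+1)}) − h(β_0 + Σ_{ℓ≤r} β_{π(ℓ)}); in particular, if β_{π(r+1)} < β_{π(r)} then AUC(π') < AUC(π). -/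
open Finset

/-- `AUC(σ) = Σ_{j=0}^n h(β₀ + Σ_{ℓ=1}^j β_{σ(ℓ)})`, where positions
`1,...,n` are represented by `Fin n` (position `ℓ` has `ℓ.val = ℓ − 1`). -/
noncomputable def aucMono {n : ℕ} (h : ℝ → ℝ) (β₀ : ℝ) (β : Fin n → ℝ)
    (σ : Equiv.Perm (Fin n)) : ℝ :=
  ∑ j ∈ Finset.range (n + 1),
    h (β₀ + ∑ l ∈ univ.filter fun i : Fin n => i.val < j, β (σ l))

/-- Swapping adjacent positions `r` and `r+1` of a permutation changes the AUC
by `h(β₀ + Σ_{ℓ<r} β_{π(ℓ)} + β_{π(r+1)}) − h(β₀ + Σ_{ℓ≤r} β_{π(ℓ)})`; in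
particular, for strictly increasing `h`, if `β_{π(r+1)} < β_{π(r)}` then the
swap strictly decreases the AUC. -/
theorem auc_adjacent_swap (n : ℕ) (h : ℝ → ℝ) (hh : StrictMono h)
    (β₀ : ℝ) (β : Fin n → ℝ) (π : Equiv.Perm (Fin n))
    (r : Fin n) (hr : r.val + 1 < n) :
    aucMono h β₀ β ((Equiv.swap r ⟨r.val + 1, hr⟩).trans π)
        - aucMono h β₀ β π
      = h (β₀ + (∑ l ∈ univ.filter fun i : Fin n => i.val < r.val, β (π l))
            + β (π ⟨r.val + 1, hr⟩))
        - h (β₀ + ∑ l ∈ univ.filter fun i : Fin n => i.val ≤ r.val, β (π l))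
    ∧ (β (π ⟨r.val + 1, hr⟩) < β (π r) →
        aucMono h β₀ β ((Equiv.swap r ⟨r.val + 1, hr⟩).trans π)
          < aucMono h β₀ β π) := by
  set r' : Fin n := ⟨r.val + 1, hr⟩ with hr'def
  have hr'val : r'.val = r.val + 1 := rfl
  have hrne : r ≠ r' := by
    intro hEq
    have := congrArg Fin.val hEq
    omega
  -- swap fixes elements with val < r.val
  have hfix : ∀ l : Fin n, l.val < r.val → Equiv.swap r r' l = l := by
    intro l hl
    apply Equiv.swap_apply_of_ne_of_ne
    · intro hEq; have := congrArg Fin.val hEq; omega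
    · intro hEq; have := congrArg Fin.val hEq; omega
  -- for j ≠ r+1 the inner sums agree
  have key : ∀ j : ℕ, j ≠ r.val + 1 →
      (∑ l ∈ univ.filter fun i : Fin n => i.val < j, β (π (Equiv.swap r r' l)))
      = ∑ l ∈ univ.filter fun i : Fin n => i.val < j, β (π l) := by
    intro j hj
    refine Finset.sum_equiv (Equiv.swap r r') ?_ ?_
    · intro i
      simp only [mem_filter, mem_univ, true_and]
      rcases eq_or_ne i r with rfl | h1
      · rw [Equiv.swap_apply_left, hr'val]; omega
      rcases eq_or_ne i r' with rfl | h2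
      · rw [Equiv.swap_apply_right]; rw [hr'val]; omega
      · rw [Equiv.swap_apply_of_ne_of_ne h1 h2]
    · intro i _; rfl
  have hinsert : (univ.filter fun i : Fin n => i.val < r.val + 1)
      = insert r (univ.filter fun i : Fin n => i.val < r.val) := by
    ext i
    simp only [mem_filter, mem_univ, true_and, mem_insert, Fin.ext_iff]
    omega
  have hnm : r ∉ univ.filter fun i : Fin n => i.val < r.val := by simp
  have hle : (univ.filter fun i : Fin n => i.val ≤ r.val)
      = (univ.filter fun i : Fin n => i.val < r.val + 1) := by
    ext i; simp only [mem_filter, mem_univ, true_and]; omega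
  -- the two special inner sums
  have hsum1 : (∑ l ∈ univ.filter fun i : Fin n => i.val < r.val + 1,
        β (π (Equiv.swap r r' l)))
      = (∑ l ∈ univ.filter fun i : Fin n => i.val < r.val, β (π l)) + β (π r') := by
    rw [hinsert, Finset.sum_insert hnm, Equiv.swap_apply_left, add_comm]
    congr 1
    refine Finset.sum_congr rfl ?_
    intro l hl
    simp only [mem_filter, mem_univ, true_and] at hl
    rw [hfix l hl]
  have hsum2 : (∑ l ∈ univ.filter fun i : Fin n => i.val ≤ r.val, β (π l))
      = (∑ l ∈ univ.filter fun i : Fin n => i.val < r.val, β (π l)) + β (π r) := by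
    rw [hle, hinsert, Finset.sum_insert hnm, add_comm]
  have main : aucMono h β₀ β ((Equiv.swap r r').trans π) - aucMono h β₀ β π
      = h (β₀ + (∑ l ∈ univ.filter fun i : Fin n => i.val < r.val, β (π l))
            + β (π r'))
        - h (β₀ + ∑ l ∈ univ.filter fun i : Fin n => i.val ≤ r.val, β (π l)) := by
    unfold aucMono
    simp only [Equiv.trans_apply]
    rw [← Finset.sum_sub_distrib]
    rw [Finset.sum_eq_single_of_mem (r.val + 1) (Finset.mem_range.mpr (by omega))]
    · rw [hsum1, ← hle, ← add_assoc]
    · intro j _ hj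
      rw [key j hj, sub_self]
  refine ⟨main, fun hlt => ?_⟩
  have : aucMono h β₀ β ((Equiv.swap r r').trans π) - aucMono h β₀ β π < 0 := by
    rw [main, hsum2, sub_neg]
    apply hh
    linarith
  linarith
end
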